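/- Let f be a homeomorphism of the circle S¹. Then there exists a fully supported Borel probability measure on S¹ that is inner-distal with respect to f if and only if f is distal. -/

import Mathlib

open Metric Set MeasureTheory Filter Topology

/-- The proximal cell of `x` with respect to the iterates `f ^ n`, `n : ℤ`. -/
noncomputable def proximalCell {X : Type*} [MetricSpace X] (f : Equiv.Perm X) (x : X) : Set X :=
  {y | (⨅ n : ℤ, dist ((f ^ n) x) ((f ^ n) y)) = 0}

/-- A circle homeomorphism has a fully supported inner-distal Borel probability measure
iff it is distal. -/

abbrev XX := AddCircle (1:ℝ)

noncomputable def arcP (a b : XX) : ℝ := ((AddCircle.equivIco 1 0) (b - a) : ℝ)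

lemma arcP_mem (a b : XX) : arcP a b ∈ Ico (0:ℝ) 1 := by
  have := ((AddCircle.equivIco (1:ℝ) 0) (b-a)).2
  simpa [arcP] using this

lemma coe_arcP (a b : XX) : ((arcP a b : ℝ) : XX) = b - a :=
  (AddCircle.equivIco 1 0).symm_apply_apply (b - a)

lemma arcP_pos {a b : XX} (h : a ≠ b) : 0 < arcP a b := by
  rcases (arcP_mem a b).1.lt_or_eq with h' | h'
  · exact h'
  · exfalso
    have := coe_arcP a b
    rw [← h'] at this
    simp at this
    exact h (sub_eq_zero.mp this.symm).symm

lemma add_arcP {a b : XX} : a + (arcP a b : ℝ) = b := by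
  rw [coe_arcP]; abel

def arc (a : XX) (r : ℝ) : Set XX := (fun t : ℝ => a + (t : XX)) '' Ioo 0 r

lemma arc_isOpen (a : XX) (r : ℝ) : IsOpen (arc a r) := by
  have : IsOpenMap (fun t : ℝ => a + (t : XX)) := by
    have h1 : IsOpenMap ((↑) : ℝ → XX) := QuotientAddGroup.isOpenMap_coe
    have h2 : IsOpenMap (fun z : XX => a + z) := (Homeomorph.addLeft a).isOpenMap
    exact h2.comp h1
  exact this _ isOpen_Ioo

lemma arc_preconnected (a : XX) (r : ℝ) : IsPreconnected (arc a r) := by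
  have hc : Continuous (fun t : ℝ => a + (t : XX)) :=
    continuous_const.add (AddCircle.continuous_mk' 1)
  exact isPreconnected_Ioo.image _ hc.continuousOn

lemma arc_nonempty (a : XX) {r : ℝ} (hr : 0 < r) : (arc a r).Nonempty :=
  ⟨a + ((r/2 : ℝ) : XX), ⟨r/2, ⟨half_pos hr, half_lt_self hr⟩, rfl⟩⟩

lemma no_int_in_unit {n : ℤ} (h1 : (0:ℝ) < n) (h2 : (n:ℝ) < 1) : False := by
  rcases lt_or_ge n 1 with h | h
  · have : (n:ℝ) ≤ 0 := by exact_mod_cast Int.lt_add_one_iff.mp h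
    linarith
  · have : (1:ℝ) ≤ n := by exact_mod_cast h
    linarith

lemma norm_coe_le (t : ℝ) : ‖(t : XX)‖ ≤ |t| := by
  simpa [Real.norm_eq_abs] using QuotientAddGroup.norm_mk_le_norm (S := AddSubgroup.zmultiples (1:ℝ)) (m := t)

lemma dist_lt_of_mem_arc {a z : XX} {r : ℝ} (hz : z ∈ arc a r) : dist z a < r := by
  obtain ⟨t, ht, rfl⟩ := hz
  have h1 : a + (t:XX) - a = (t:XX) := by abel
  rw [dist_eq_norm, h1]
  calc ‖(t:XX)‖ ≤ |t| := norm_coe_le t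
    _ < r := by rw [abs_of_pos ht.1]; exact ht.2

lemma coe_add' (u v : ℝ) : ((u + v:ℝ):XX) = (u:XX) + (v:XX) := rfl
lemma coe_one : ((1:ℝ):XX) = 0 := AddCircle.coe_period (p := (1:ℝ))
lemma coe_sub' (u v : ℝ) : ((u - v:ℝ):XX) = (u:XX) - (v:XX) := rfl

lemma coe_eq_zero_int {t : ℝ} (h : (t : XX) = 0) : ∃ n : ℤ, (n:ℝ) = t := by
  rw [AddCircle.coe_eq_zero_iff] at h
  obtain ⟨n, hn⟩ := h
  exact ⟨n, by simpa using hn⟩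

lemma self_not_mem_arc {a : XX} {r : ℝ} (hr : r ≤ 1) : a ∉ arc a r := by
  rintro ⟨t, ht, h⟩
  have : ((t:ℝ) : XX) = 0 := by
    have := h
    rw [show a + (t:XX) = a ↔ (t:XX) = 0 from add_eq_left] at this
    exact this
  obtain ⟨n, hn⟩ := coe_eq_zero_int this
  exact no_int_in_unit (by rw [hn]; exact ht.1) (by rw [hn]; linarith [ht.2])

lemma arc_disjoint_aux {a : XX} {r s : ℝ} (hr : 0 < r) (hs : r + s ≤ 1)
    {z : XX} (h1 : z ∈ arc a r) (h2 : z ∈ arc (a + (r:XX)) s) : False := by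
  obtain ⟨t, ht, rfl⟩ := h1
  obtain ⟨u, hu, hz⟩ := h2
  have h0 : a + (r:XX) + (u:XX) = a + (t:XX) := hz
  have hc : ((r + u - t : ℝ) : XX) = 0 := by
    rw [show (r + u - t : ℝ) = (r + u) - t from rfl, coe_sub', coe_add']
    have : (r:XX)+(u:XX)-(t:XX) = (a + (r:XX) + (u:XX)) - (a + (t:XX)) := by abel
    rw [this, h0, sub_self]
  obtain ⟨n, hn⟩ := coe_eq_zero_int hc
  exact no_int_in_unit (by rw [hn]; linarith [ht.2, hu.1]) (by rw [hn]; linarith [ht.1, hu.2])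

lemma endpoint_not_mem_arc {a : XX} {r : ℝ} (hr1 : r ≤ 1) : a + (r:XX) ∉ arc a r := by
  rintro ⟨t, ht, h⟩
  have h0 : a + (t:XX) = a + (r:XX) := h
  have hc : ((r - t : ℝ) : XX) = 0 := by
    rw [coe_sub']
    have : (r:XX)-(t:XX) = (a + (r:XX)) - (a + (t:XX)) := by abel
    rw [this, ← h0, sub_self]
  obtain ⟨n, hn⟩ := coe_eq_zero_int hc
  exact no_int_in_unit (by rw [hn]; linarith [ht.2]) (by rw [hn]; linarith [ht.1])

lemma arc_cover (a : XX) {r : ℝ} (hr : r ∈ Ioo (0:ℝ) 1) (z : XX) :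
    z = a ∨ z = a + (r:XX) ∨ z ∈ arc a r ∨ z ∈ arc (a + (r:XX)) (1 - r) := by
  set t := arcP a z with htdef
  have htm := arcP_mem a z
  have htz : a + (t:XX) = z := add_arcP
  rcases eq_or_lt_of_le htm.1 with h0 | h0
  · left; rw [← htz, htdef, ← h0]; simp
  rcases lt_trichotomy t r with h1 | h1 | h1
  · right; right; left; exact ⟨t, ⟨h0, h1⟩, htz⟩
  · right; left; rw [← htz, h1]
  · right; right; right
    refine ⟨t - r, ⟨by linarith, by linarith [htm.2]⟩, ?_⟩
    show a + (r:XX) + ((t - r : ℝ):XX) = z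
    rw [coe_sub', ← htz]
    abel

lemma small_side {a b : XX} {r ε : ℝ} (hrm : r ∈ Ioo (0:ℝ) 1)
    (hab' : a + ((r:ℝ):XX) = b) (hd : dist a b < ε) :
    (∀ z ∈ arc a r, dist z a < ε) ∨
    (∀ z ∈ arc b (1 - r), dist z a < ε) := by
  have hba : b + ((1 - r : ℝ) : XX) = a := by
    rw [← hab', coe_sub', coe_one]
    abel
  have hnorm : ‖((r:ℝ) : XX)‖ < ε := by
    have h2 : b - a = ((r:ℝ):XX) := by rw [← hab']; abel
    rw [dist_eq_norm, ← norm_neg, neg_sub, h2] at hd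
    exact hd
  have hkey : r < ε ∨ 1 - r < ε := by
    by_contra hc
    push_neg at hc
    rw [AddCircle.norm_eq] at hnorm
    simp only [inv_one, one_mul, mul_one] at hnorm
    rcases le_or_gt (round r) 0 with h | h
    · have h1 : ((round r : ℤ):ℝ) ≤ 0 := by exact_mod_cast h
      have : r ≤ |r - round r| := by rw [abs_of_nonneg (by linarith [hrm.1])]; linarith
      linarith [hc.1]
    · have h1 : (1:ℝ) ≤ ((round r : ℤ):ℝ) := by exact_mod_cast h
      have : 1 - r ≤ |r - round r| := by
        rcases abs_cases (r - ((round r : ℤ):ℝ)) with ⟨h2, _⟩ | ⟨h2, _⟩ <;> rw [h2] <;>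
          linarith [hrm.2]
      linarith [hc.2]
  rcases hkey with h | h
  · left; intro z hz; exact (dist_lt_of_mem_arc hz).trans h
  · right; intro z hz
    obtain ⟨t, ht, rfl⟩ := hz
    rw [← hba, dist_add_left, dist_eq_norm, ← coe_sub']
    calc ‖((t - (1 - r) : ℝ) : XX)‖ ≤ |t - (1 - r)| := norm_coe_le _
      _ < ε := by rw [abs_of_nonpos (by linarith [ht.2])]; linarith [ht.1]

lemma ne_of_add_coe {x y : XX} {r : ℝ} (hr : r ∈ Ioo (0:ℝ) 1) (hxy : x + ((r:ℝ):XX) = y) :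
    x ≠ y := by
  intro he
  rw [he, add_eq_left] at hxy
  obtain ⟨n, hn⟩ := coe_eq_zero_int hxy
  exact no_int_in_unit (by rw [hn]; exact hr.1) (by rw [hn]; exact hr.2)

lemma rev_endpoint {x y : XX} {r : ℝ} (hxy : x + ((r:ℝ):XX) = y) :
    y + ((1 - r : ℝ):XX) = x := by
  rw [← hxy, coe_sub', coe_one]
  abel

lemma step (h : XX ≃ₜ XX) {x y : XX} {r : ℝ} (hr : r ∈ Ioo (0:ℝ) 1)
    (hxy : x + ((r:ℝ):XX) = y) {ε : ℝ} (hd : dist (h x) (h y) < ε) :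
    (∀ z ∈ arc x r, dist (h z) (h x) < ε) ∨
    (∀ z ∈ arc y (1 - r), dist (h z) (h x) < ε) := by
  have hxney : x ≠ y := ne_of_add_coe hr hxy
  have hhxy : h x ≠ h y := fun he => hxney (h.injective he)
  set ρ := arcP (h x) (h y) with hρdef
  have hρm : ρ ∈ Ico (0:ℝ) 1 := arcP_mem _ _
  have hρIoo : ρ ∈ Ioo (0:ℝ) 1 := ⟨arcP_pos hhxy, hρm.2⟩
  have h' : h x + ((ρ:ℝ):XX) = h y := add_arcP
  have Hsmall := small_side hρIoo h' hd
  have hcoverC : ∀ w : XX, w = h x ∨ w = h y ∨ w ∈ arc (h x) ρ ∨ w ∈ arc (h y) (1 - ρ) := by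
    intro w
    have := arc_cover (h x) hρIoo w
    rwa [h'] at this
  have hcoverA : ∀ z : XX, z = x ∨ z = y ∨ z ∈ arc x r ∨ z ∈ arc y (1 - r) := by
    intro z
    have := arc_cover x hr z
    rwa [hxy] at this
  have hdisjC : Disjoint (arc (h x) ρ) (arc (h y) (1 - ρ)) := by
    rw [Set.disjoint_left]
    intro w h1 h2
    rw [← h'] at h2
    exact arc_disjoint_aux hρIoo.1 (by linarith) h1 h2
  have hAsub : h '' arc x r ⊆ arc (h x) ρ ∪ arc (h y) (1 - ρ) := by
    rintro w ⟨z, hz, rfl⟩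
    rcases hcoverC (h z) with h1 | h1 | h1 | h1
    · exact absurd hz (by rw [h.injective h1]; exact self_not_mem_arc hr.2.le)
    · exact absurd hz (by rw [h.injective h1, ← hxy]; exact endpoint_not_mem_arc hr.2.le)
    · exact Or.inl h1
    · exact Or.inr h1
  have hA'sub : h '' arc y (1 - r) ⊆ arc (h x) ρ ∪ arc (h y) (1 - ρ) := by
    rintro w ⟨z, hz, rfl⟩
    rcases hcoverC (h z) with h1 | h1 | h1 | h1
    · exact absurd hz (by
        rw [h.injective h1, ← rev_endpoint hxy]
        exact endpoint_not_mem_arc (by linarith [hr.1]))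
    · exact absurd hz (by rw [h.injective h1]; exact self_not_mem_arc (by linarith [hr.1]))
    · exact Or.inl h1
    · exact Or.inr h1
  have hA := IsPreconnected.subset_or_subset (arc_isOpen (h x) ρ) (arc_isOpen (h y) (1 - ρ))
    hdisjC hAsub ((arc_preconnected x r).image h h.continuous.continuousOn)
  have hA' := IsPreconnected.subset_or_subset (arc_isOpen (h x) ρ) (arc_isOpen (h y) (1 - ρ))
    hdisjC hA'sub ((arc_preconnected y (1 - r)).image h h.continuous.continuousOn)
  have hfill : ∀ D C : Set XX, D.Nonempty → Disjoint C D → h x ∉ D → h y ∉ D →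
      h '' arc x r ⊆ C → h '' arc y (1 - r) ⊆ C → False := by
    rintro D C ⟨w, hw⟩ hdisj hx' hy' hsA hsA'
    rcases hcoverA (h.symm w) with h1 | h1 | h1 | h1
    · have : w = h x := by rw [← h.apply_symm_apply w, h1]
      exact hx' (this ▸ hw)
    · have : w = h y := by rw [← h.apply_symm_apply w, h1]
      exact hy' (this ▸ hw)
    · have : w ∈ C := hsA ⟨_, h1, h.apply_symm_apply w⟩
      exact Set.disjoint_left.mp hdisj this hw
    · have : w ∈ C := hsA' ⟨_, h1, h.apply_symm_apply w⟩
      exact Set.disjoint_left.mp hdisj this hw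
  have hxC1 : h x ∉ arc (h x) ρ := self_not_mem_arc hρm.2.le
  have hyC1 : h y ∉ arc (h x) ρ := by
    rw [← h']; exact endpoint_not_mem_arc hρm.2.le
  have hxC2 : h x ∉ arc (h y) (1 - ρ) := by
    rw [← rev_endpoint h']; exact endpoint_not_mem_arc (by linarith [hρIoo.1])
  have hyC2 : h y ∉ arc (h y) (1 - ρ) := self_not_mem_arc (by linarith [hρIoo.1])
  rcases Hsmall with HS | HS
  · rcases hA with h1 | h1
    · left; intro z hz; exact HS _ (h1 ⟨z, hz, rfl⟩)
    · rcases hA' with h2 | h2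
      · right; intro z hz; exact HS _ (h2 ⟨z, hz, rfl⟩)
      · exact absurd (hfill (arc (h x) ρ) (arc (h y) (1 - ρ))
          (arc_nonempty _ hρIoo.1) hdisjC.symm hxC1 hyC1 h1 h2) not_false
  · rcases hA with h1 | h1
    · rcases hA' with h2 | h2
      · exact absurd (hfill (arc (h y) (1 - ρ)) (arc (h x) ρ)
          (arc_nonempty _ (by linarith [hρIoo.2])) hdisjC hxC2 hyC2 h1 h2) not_false
      · right; intro z hz; exact HS _ (h2 ⟨z, hz, rfl⟩)
    · left; intro z hz; exact HS _ (h1 ⟨z, hz, rfl⟩)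




lemma pow_homeo (f : XX ≃ₜ XX) (n : ℤ) : ∃ h : XX ≃ₜ XX, ∀ z, h z = (f.toEquiv ^ n) z := by
  induction n using Int.induction_on with
  | zero => exact ⟨Homeomorph.refl XX, by simp⟩
  | succ k ih =>
    obtain ⟨h, hh⟩ := ih
    refine ⟨f.trans h, fun z => ?_⟩
    rw [show ((k:ℤ) + 1) = (k:ℤ) + 1 from rfl, zpow_add_one, Equiv.Perm.mul_apply,
      Homeomorph.trans_apply, hh]
    rfl
  | pred k ih =>
    obtain ⟨h, hh⟩ := ih
    refine ⟨f.symm.trans h, fun z => ?_⟩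
    rw [zpow_sub_one, Equiv.Perm.mul_apply, Homeomorph.trans_apply, hh]
    rfl

instance : Nontrivial XX := by
  refine ⟨(0:XX), ((1/2:ℝ):XX), fun h => ?_⟩
  obtain ⟨n, hn⟩ := coe_eq_zero_int h.symm
  exact no_int_in_unit (by rw [hn]; norm_num) (by rw [hn]; norm_num)

lemma interior_singleton_empty (x : XX) : interior ({x} : Set XX) = ∅ := by
  by_contra hne
  rw [← Ne, ← nonempty_iff_ne_empty] at hne
  have heq : interior ({x} : Set XX) = {x} := by
    apply Set.eq_singleton_iff_nonempty_unique_mem.mpr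
    exact ⟨hne, fun w hw => Set.mem_singleton_iff.mp (interior_subset hw)⟩
  have hclopen : IsClopen ({x} : Set XX) := ⟨isClosed_singleton, heq ▸ isOpen_interior⟩
  rcases isClopen_iff.mp hclopen with h | h
  · exact (Set.singleton_ne_empty x) h
  · obtain ⟨a, b, hab⟩ := exists_pair_ne XX
    have ha : a = x := Set.mem_singleton_iff.mp (h.symm ▸ Set.mem_univ a)
    have hb : b = x := Set.mem_singleton_iff.mp (h.symm ▸ Set.mem_univ b)
    exact hab (ha.trans hb.symm)

theorem stmt6 (f : AddCircle (1:ℝ) ≃ₜ AddCircle (1:ℝ)) :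
    (∃ μ : Measure (AddCircle (1:ℝ)), IsProbabilityMeasure μ ∧
        (∀ U : Set (AddCircle (1:ℝ)), IsOpen U → U.Nonempty → 0 < μ U) ∧
        ∀ x : AddCircle (1:ℝ), μ (interior (proximalCell f.toEquiv x)) = 0) ↔
      (∀ x : AddCircle (1:ℝ), proximalCell f.toEquiv x = {x}) := by
  constructor
  · rintro ⟨μ, hprob, hfull, hinner⟩ x
    ext y
    simp only [proximalCell, Set.mem_setOf_eq, Set.mem_singleton_iff]
    constructor
    · intro hy
      by_contra hne
      have hxy : x ≠ y := fun h => hne h.symm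
      set r := arcP x y with hrdef
      have hrm : r ∈ Ioo (0:ℝ) 1 := ⟨arcP_pos hxy, (arcP_mem x y).2⟩
      have hxyr : x + ((r:ℝ):XX) = y := add_arcP
      have hbdd : ∀ z w : XX, BddBelow (Set.range fun n : ℤ => dist ((f.toEquiv ^ n) z) ((f.toEquiv ^ n) w)) :=
        fun z w => ⟨0, fun d ⟨n, hn⟩ => hn ▸ dist_nonneg⟩
      have key : (∀ ε > (0:ℝ), ∃ n : ℤ, ∀ z ∈ arc x r, dist ((f.toEquiv ^ n) z) ((f.toEquiv ^ n) x) < ε)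
          ∨ (∀ ε > (0:ℝ), ∃ n : ℤ, ∀ z ∈ arc y (1 - r), dist ((f.toEquiv ^ n) z) ((f.toEquiv ^ n) x) < ε) := by
        by_contra hc
        push_neg at hc
        obtain ⟨⟨ε₁, hε₁, H₁⟩, ⟨ε₂, hε₂, H₂⟩⟩ := hc
        have hεpos : 0 < min ε₁ ε₂ := lt_min hε₁ hε₂
        have hex : ∃ n : ℤ, dist ((f.toEquiv ^ n) x) ((f.toEquiv ^ n) y) < min ε₁ ε₂ :=
          exists_lt_of_ciInf_lt (hy ▸ hεpos)
        obtain ⟨n, hn⟩ := hex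
        obtain ⟨h, hh⟩ := pow_homeo f n
        rw [← hh, ← hh] at hn
        rcases step h hrm hxyr hn with H | H
        · obtain ⟨z, hz, hz'⟩ := H₁ n
          rw [← hh, ← hh] at hz'
          exact absurd ((H z hz).trans_le (min_le_left _ _)) (not_lt.mpr hz')
        · obtain ⟨z, hz, hz'⟩ := H₂ n
          rw [← hh, ← hh] at hz'
          exact absurd ((H z hz).trans_le (min_le_right _ _)) (not_lt.mpr hz')
      have hconc : ∀ B : Set XX, IsOpen B → B.Nonempty →
          (∀ ε > (0:ℝ), ∃ n : ℤ, ∀ z ∈ B, dist ((f.toEquiv ^ n) z) ((f.toEquiv ^ n) x) < ε) → False := by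
        intro B hBopen hBne hB
        have hsub : B ⊆ proximalCell f.toEquiv x := by
          intro z hz
          simp only [proximalCell, Set.mem_setOf_eq]
          refine le_antisymm ?_ (le_ciInf fun n => dist_nonneg)
          refine le_of_forall_pos_le_add fun ε hε => ?_
          obtain ⟨n, hn⟩ := hB ε hε
          calc (⨅ m : ℤ, dist ((f.toEquiv ^ m) x) ((f.toEquiv ^ m) z))
              ≤ dist ((f.toEquiv ^ n) x) ((f.toEquiv ^ n) z) := ciInf_le (hbdd x z) n
            _ ≤ 0 + ε := by rw [zero_add, dist_comm]; exact (hn z hz).le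
        have h1 : 0 < μ B := hfull B hBopen hBne
        have h2 : μ B ≤ μ (interior (proximalCell f.toEquiv x)) :=
          measure_mono (interior_maximal hsub hBopen)
        rw [hinner x] at h2
        exact absurd (le_antisymm h2 (zero_le)) (ne_of_gt h1)
      rcases key with H | H
      · exact hconc _ (arc_isOpen x r) (arc_nonempty x hrm.1) H
      · exact hconc _ (arc_isOpen y (1 - r)) (arc_nonempty y (by linarith [hrm.2])) H
    · intro hyx
      rw [hyx]
      have : ∀ n : ℤ, dist ((f.toEquiv ^ n) x) ((f.toEquiv ^ n) x) = 0 := fun n => dist_self _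
      simp only [this]
      exact ciInf_const
  · intro hdist
    refine ⟨volume, ⟨by simp [AddCircle.measure_univ]⟩, fun U hU hUne => hU.measure_pos volume hUne, fun x => ?_⟩
    rw [hdist x, interior_singleton_empty x]
    simp
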